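/- arXiv:1705.03045 — 3 statements merged into one kernel-verified Lean document; each statement's English description precedes it below -/
import Mathlib

section
/- (Weak non-Boolean Groemer integral theorem.) Let L be an orthocomplemented lattice on which a group G acts by automorphisms of orthocomplemented lattices, let A be an abelian group with trivial G-action, and let B ⊆ L be a subset closed under finite meets such that G·B = {g·b : g ∈ G, b ∈ B} is an orthogonal generating set for L. Then the restriction map from the set of G-invariant additive measures L → A to the set of N_G(B)-invariant functions ν : B → A satisfying ν(b₁ ⊔ b₂) = ν(b₁) + ν(b₂) for all b₁, b₂ ∈ B with b₁ ⊥ b₂ is injective. -/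
/-- An orthocomplemented lattice: a bounded lattice with an orthocomplementation `xᶜ`
which is a complement, an involution, and order-reversing. -/
class Ortho (L : Type*) extends Lattice L, BoundedOrder L, Compl L where
  sup_compl : ∀ x : L, x ⊔ xᶜ = ⊤
  inf_compl : ∀ x : L, x ⊓ xᶜ = ⊥
  compl_compl : ∀ x : L, xᶜᶜ = x
  compl_le_compl : ∀ x y : L, x ≤ y → yᶜ ≤ xᶜ

/-- An action of a group `G` on an orthocomplemented lattice `L` by automorphisms of
orthocomplemented lattices. -/
structure OrthoAction (G L : Type*) [Group G] [Ortho L] where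
  ρ : G → L → L
  bij : ∀ g, Function.Bijective (ρ g)
  map_one : ρ 1 = id
  map_mul : ∀ g h, ρ (g * h) = ρ g ∘ ρ h
  map_bot : ∀ g, ρ g ⊥ = ⊥
  map_top : ∀ g, ρ g ⊤ = ⊤
  map_inf : ∀ g x y, ρ g (x ⊓ y) = ρ g x ⊓ ρ g y
  map_sup : ∀ g x y, ρ g (x ⊔ y) = ρ g x ⊔ ρ g y
  map_compl : ∀ g x, ρ g xᶜ = (ρ g x)ᶜ

/-- **Weak non-Boolean Groemer integral theorem.**  If `B₀ ⊆ L` is closed under finite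
meets and `G·B₀` is an orthogonal generating set for `L`, then the restriction map from
`G`-invariant additive measures `L → A` to (`N_G(B₀)`-invariant, additive) functions on
`B₀` is injective: two `G`-invariant additive measures agreeing on `B₀` are equal. -/
theorem stmt_12 {G L : Type*} [Group G] [Ortho L] (a : OrthoAction G L)
    (A : Type*) [AddCommGroup A] (B₀ : Set L)
    (hmeet : ∀ x ∈ B₀, ∀ y ∈ B₀, x ⊓ y ∈ B₀)
    -- `G·B₀` is an orthogonal generating set for `L`:
    (hgen : ∀ x : L, ∃ (k : ℕ) (b : Fin k → L),
      (∀ i, ∃ (g : G) (c : L), c ∈ B₀ ∧ b i = a.ρ g c) ∧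
      (∀ i j, i ≠ j → b j ≤ (b i)ᶜ) ∧ x = Finset.univ.sup b) :
    ∀ ν₁ ν₂ : L → A,
      (∀ x y : L, y ≤ xᶜ → ν₁ (x ⊔ y) = ν₁ x + ν₁ y) →
      (∀ (g : G) (x : L), ν₁ (a.ρ g x) = ν₁ x) →
      (∀ x y : L, y ≤ xᶜ → ν₂ (x ⊔ y) = ν₂ x + ν₂ y) →
      (∀ (g : G) (x : L), ν₂ (a.ρ g x) = ν₂ x) →
      (∀ b ∈ B₀, ν₁ b = ν₂ b) → ν₁ = ν₂ := by
  intro ν₁ ν₂ h1add h1inv h2add h2inv hB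
  have hbot1 : ν₁ ⊥ = 0 := by
    have h := h1add ⊥ ⊥ bot_le
    simp only [sup_idem] at h
    exact (left_eq_add.mp h)
  have hbot2 : ν₂ ⊥ = 0 := by
    have h := h2add ⊥ ⊥ bot_le
    simp only [sup_idem] at h
    exact (left_eq_add.mp h)
  funext x
  obtain ⟨k, b, hb, horth, hx⟩ := hgen x
  have key : ∀ s : Finset (Fin k), ν₁ (s.sup b) = ν₂ (s.sup b) := by
    classical
    intro s
    induction s using Finset.induction_on with
    | empty => simp [hbot1, hbot2]
    | @insert i t hi ih =>
      rw [Finset.sup_insert]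
      have hle : t.sup b ≤ (b i)ᶜ := by
        apply Finset.sup_le
        intro j hj
        exact horth i j (fun h => hi (h ▸ hj))
      rw [h1add _ _ hle, h2add _ _ hle, ih]
      congr 1
      obtain ⟨g, c, hc, hbi⟩ := hb i
      rw [hbi, h1inv, h2inv, hB c hc]
  rw [hx]
  exact key Finset.univ
end

section
/- Let L be an orthocomplemented lattice and let B ⊆ L be an orthogonal generating set for L. Under the bijection between additive measures ν : L → ℝ and ℝ-linear functionals ℓ : M_ℝ → ℝ (given by ν = ℓ ∘ π_ℝ), the positive measures (those with ν(x) ≥ 0 for all x ∈ L) correspond exactly to the linear functionals that are nonnegative on π_ℝ(B), i.e., M₊(L) is in bijection with the dual cone {ℓ : M_ℝ → ℝ linear : ℓ(π_ℝ(b)) ≥ 0 for all b ∈ B}. -/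
open TensorProduct

/-- The subgroup `S` of the free abelian group on `L` generated by the elements
`(x ⊔ y) - x - y` for orthogonal `x, y` (i.e. `y ≤ xᶜ`). -/
def orthoRel (L : Type*) [Ortho L] : AddSubgroup (FreeAbelianGroup L) :=
  AddSubgroup.closure {a | ∃ x y : L, y ≤ xᶜ ∧
    a = FreeAbelianGroup.of (x ⊔ y) - FreeAbelianGroup.of x - FreeAbelianGroup.of y}

/-- `M(L)`: the quotient of the free abelian group on `L` by the subgroup `S`. -/
abbrev MM (L : Type*) [Ortho L] := FreeAbelianGroup L ⧸ orthoRel L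

/-- `M_ℝ = M(L) ⊗_ℤ ℝ`. -/
abbrev MMR (L : Type*) [Ortho L] := ℝ ⊗[ℤ] MM L

/-- The universal real measure `π_ℝ : L → M_ℝ`. -/
noncomputable def piR (L : Type*) [Ortho L] : L → MMR L :=
  fun x => (1 : ℝ) ⊗ₜ[ℤ] (QuotientAddGroup.mk (FreeAbelianGroup.of x) : MM L)

section Aux

variable {L : Type*} [Ortho L]

lemma aux_piR_add {x y : L} (h : y ≤ xᶜ) : piR L (x ⊔ y) = piR L x + piR L y := by
  have hmem : FreeAbelianGroup.of (x ⊔ y) - FreeAbelianGroup.of x - FreeAbelianGroup.of y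
      ∈ orthoRel L :=
    AddSubgroup.subset_closure ⟨x, y, h, rfl⟩
  have hq : (QuotientAddGroup.mk (FreeAbelianGroup.of (x ⊔ y)) : MM L) =
      QuotientAddGroup.mk (FreeAbelianGroup.of x) +
      QuotientAddGroup.mk (FreeAbelianGroup.of y) := by
    have := (QuotientAddGroup.eq_zero_iff _).2 hmem
    rw [QuotientAddGroup.mk_sub, QuotientAddGroup.mk_sub, sub_sub, sub_eq_zero] at this
    simpa using this
  simp only [piR, hq, TensorProduct.tmul_add]

lemma aux_nu_bot {ν : L → ℝ} (hν : ∀ x y : L, y ≤ xᶜ → ν (x ⊔ y) = ν x + ν y) :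
    ν ⊥ = 0 := by
  have := hν ⊥ ⊥ bot_le
  rw [sup_idem] at this
  linarith

lemma aux_nu_sup {ν : L → ℝ} (hν : ∀ x y : L, y ≤ xᶜ → ν (x ⊔ y) = ν x + ν y)
    {ι : Type*} (s : Finset ι) (b : ι → L)
    (horth : ∀ i ∈ s, ∀ j ∈ s, i ≠ j → b j ≤ (b i)ᶜ) :
    ν (s.sup b) = ∑ i ∈ s, ν (b i) := by
  classical
  induction s using Finset.cons_induction with
  | empty => simpa using aux_nu_bot hν
  | cons a s ha ih =>
    have hle : s.sup b ≤ (b a)ᶜ :=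
      Finset.sup_le fun j hj =>
        horth a (Finset.mem_cons_self a s) j (Finset.mem_cons_of_mem hj)
          (fun hja => ha (hja ▸ hj))
    rw [Finset.sup_cons, Finset.sum_cons, hν _ _ hle,
      ih (fun i hi j hj hij =>
        horth i (Finset.mem_cons_of_mem hi) j (Finset.mem_cons_of_mem hj) hij)]

/-- The additive hom `MM L →+ ℝ` induced by an additive measure. -/
noncomputable def auxG (ν : {ν : L → ℝ // ∀ x y : L, y ≤ xᶜ → ν (x ⊔ y) = ν x + ν y}) :
    MM L →+ ℝ :=
  QuotientAddGroup.lift (orthoRel L) (FreeAbelianGroup.lift ν.1) (fun a ha => by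
    have hsub : orthoRel L ≤ (FreeAbelianGroup.lift ν.1).ker := by
      rw [orthoRel, AddSubgroup.closure_le]
      rintro a ⟨x, y, hxy, rfl⟩
      have h := ν.2 x y hxy
      simp only [SetLike.mem_coe, AddMonoidHom.mem_ker, map_sub,
        FreeAbelianGroup.lift_apply_of, h]
      ring
    exact hsub ha)

@[simp] lemma auxG_of (ν : {ν : L → ℝ // ∀ x y : L, y ≤ xᶜ → ν (x ⊔ y) = ν x + ν y})
    (x : L) : auxG ν (QuotientAddGroup.mk (FreeAbelianGroup.of x)) = ν.1 x := by
  simp [auxG, FreeAbelianGroup.lift_apply_of]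

end Aux

/-- Positive real measures on `L` correspond, under the bijection between additive
measures and linear functionals on `M_ℝ`, exactly to the elements of the dual cone of
(the image under `π_ℝ` of) an orthogonal generating set `B`. -/
theorem stmt_13 {L : Type*} [Ortho L] (B : Set L)
    -- `B` is an orthogonal generating set for `L`:
    (hgen : ∀ x : L, ∃ (k : ℕ) (b : Fin k → L), (∀ i, b i ∈ B) ∧
      (∀ i j, i ≠ j → b j ≤ (b i)ᶜ) ∧ x = Finset.univ.sup b) :
    ∃ e : {ν : L → ℝ // ∀ x y : L, y ≤ xᶜ → ν (x ⊔ y) = ν x + ν y} ≃ (MMR L →ₗ[ℝ] ℝ),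
      (∀ ν (x : L), e ν (piR L x) = ν.1 x) ∧
      (∀ ν, (∀ x : L, 0 ≤ ν.1 x) ↔ ∀ b ∈ B, 0 ≤ e ν (piR L b)) := by
  classical
  -- forward map
  set F : {ν : L → ℝ // ∀ x y : L, y ≤ xᶜ → ν (x ⊔ y) = ν x + ν y} → (MMR L →ₗ[ℝ] ℝ) :=
    fun ν => LinearMap.liftBaseChange ℝ (auxG ν).toIntLinearMap with hF
  have hFeval : ∀ ν (x : L), F ν (piR L x) = ν.1 x := by
    intro ν x
    simp [hF, piR, LinearMap.liftBaseChange_tmul]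
  -- backward map
  set G : (MMR L →ₗ[ℝ] ℝ) → {ν : L → ℝ // ∀ x y : L, y ≤ xᶜ → ν (x ⊔ y) = ν x + ν y} :=
    fun ℓ => ⟨fun x => ℓ (piR L x), fun x y h => by
      show ℓ (piR L (x ⊔ y)) = ℓ (piR L x) + ℓ (piR L y)
      rw [aux_piR_add h, map_add]⟩ with hG
  have left : ∀ ν, G (F ν) = ν := by
    intro ν
    apply Subtype.ext
    funext x
    exact hFeval ν x
  have right : ∀ ℓ, F (G ℓ) = ℓ := by
    intro ℓ
    -- both agree on 1 ⊗ₜ m for all m, hence equal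
    have key : ∀ m : MM L, auxG (G ℓ) m = ℓ ((1 : ℝ) ⊗ₜ[ℤ] m) := by
      have : (auxG (G ℓ)) =
          (ℓ.toAddMonoidHom.comp
            (((TensorProduct.mk ℤ ℝ (MM L)) 1).toAddMonoidHom)) := by
        apply QuotientAddGroup.addMonoidHom_ext
        apply FreeAbelianGroup.lift_ext
        intro x
        simp [hG, piR, auxG_of]
      intro m
      exact DFunLike.congr_fun this m
    apply LinearMap.ext
    intro z
    induction z using TensorProduct.induction_on with
    | zero => simp
    | tmul r m =>
      have : (r : ℝ) ⊗ₜ[ℤ] m = r • ((1 : ℝ) ⊗ₜ[ℤ] m) := by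
        rw [TensorProduct.smul_tmul', smul_eq_mul, mul_one]
      have hone : (F (G ℓ)) ((1:ℝ) ⊗ₜ[ℤ] m) = auxG (G ℓ) m := by
        simp [hF, LinearMap.liftBaseChange_one_tmul]
      rw [this, map_smul, map_smul, hone, key m]
    | add a b ha hb => rw [map_add, map_add, ha, hb]
  refine ⟨⟨F, G, left, right⟩, ?_, ?_⟩
  · intro ν x
    simp only [Equiv.coe_fn_mk]
    exact hFeval ν x
  intro ν
  constructor
  · intro hpos b _
    simp only [Equiv.coe_fn_mk]
    rw [hFeval]; exact hpos b
  · intro hB x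
    obtain ⟨k, b, hbB, horth, hx⟩ := hgen x
    have := aux_nu_sup ν.2 Finset.univ b (fun i _ j _ hij => horth i j hij)
    rw [hx, this]
    exact Finset.sum_nonneg fun i _ => by
      have h2 := hB (b i) (hbB i)
      simp only [Equiv.coe_fn_mk] at h2
      rwa [hFeval] at h2
end

section
/- Let W be a von Neumann algebra acting on a separable complex Hilbert space. Then: (a) there exists a unique ℂ-linear map ī : M_ℂ → W such that ī ∘ π_ℂ equals the inclusion L(W) ↪ W; (b) the universal complex measure π_ℂ : L(W) → M_ℂ is injective; (c) the image of ī is dense in W with respect to the operator norm. -/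
open TensorProduct

variable {H : Type*} [NormedAddCommGroup H] [InnerProductSpace ℂ H] [CompleteSpace H]

/-- `L(W)`: the projections of a von Neumann algebra `W`, i.e. the self-adjoint
idempotent elements of `W`. -/
def LW (W : VonNeumannAlgebra H) : Type _ :=
  {p : H →L[ℂ] H // p ∈ W ∧ IsSelfAdjoint p ∧ IsIdempotentElem p}

/-- The subgroup of the free abelian group on `L(W)` generated by the elements
`(p ⊔ q) - p - q` for orthogonal projections `p, q` (for orthogonal projections,
`p ⊔ q` is the projection `p + q`). -/
def relW (W : VonNeumannAlgebra H) : AddSubgroup (FreeAbelianGroup (LW W)) :=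
  AddSubgroup.closure {a | ∃ p q r : LW W, p.1 * q.1 = 0 ∧ r.1 = p.1 + q.1 ∧
    a = FreeAbelianGroup.of r - FreeAbelianGroup.of p - FreeAbelianGroup.of q}

/-- `M_ℂ = M(L(W)) ⊗_ℤ ℂ`. -/
abbrev MCW (W : VonNeumannAlgebra H) : Type _ :=
  ℂ ⊗[ℤ] (FreeAbelianGroup (LW W) ⧸ relW W)

/-- The universal complex measure `π_ℂ : L(W) → M_ℂ`. -/
noncomputable def piC (W : VonNeumannAlgebra H) : LW W → MCW W :=
  fun p => (1 : ℂ) ⊗ₜ[ℤ]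
    (QuotientAddGroup.mk (FreeAbelianGroup.of p) : FreeAbelianGroup (LW W) ⧸ relW W)

namespace Stmt16Aux

open scoped InnerProductSpace ComplexConjugate

/-- commutation with continuous functions of a self-adjoint operator -/
lemma commute_cfc {u a : H →L[ℂ] H} (ha : IsSelfAdjoint a) (h : Commute u a) (f : ℝ → ℝ) :
    Commute u (cfc f a) := by
  by_cases hf : ContinuousOn f (spectrum ℝ a)
  · have hall : ∀ g : C(spectrum ℝ a, ℝ), Commute u (cfcHom (R := ℝ) ha g) := by
      intro g
      have hcont : Continuous fun g : C(spectrum ℝ a, ℝ) => cfcHom (R := ℝ) ha g :=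
        (cfcHom_isClosedEmbedding ha).continuous
      have hclosed : IsClosed {g : C(spectrum ℝ a, ℝ) | Commute u (cfcHom (R := ℝ) ha g)} :=
        isClosed_eq (continuous_const.mul hcont) (hcont.mul continuous_const)
      have hpoly : (polynomialFunctions (spectrum ℝ a) : Set C(spectrum ℝ a, ℝ)) ⊆
          {g : C(spectrum ℝ a, ℝ) | Commute u (cfcHom (R := ℝ) ha g)} := by
        intro g' hg
        rw [polynomialFunctions_coe] at hg
        obtain ⟨p, rfl⟩ := hg
        have hkey : ((cfcHom (R := ℝ) ha).toAlgHom.comp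
            (Polynomial.toContinuousMapOnAlgHom (spectrum ℝ a))) = Polynomial.aeval a := by
          apply Polynomial.algHom_ext
          simp only [AlgHom.coe_comp, Function.comp_apply, Polynomial.aeval_X]
          have hX : ((Polynomial.toContinuousMapOnAlgHom (spectrum ℝ a)) Polynomial.X
              : C(spectrum ℝ a, ℝ)) = (ContinuousMap.id ℝ).restrict (spectrum ℝ a) := by
            ext x
            simp [Polynomial.toContinuousMapOn, Polynomial.toContinuousMap]
          rw [hX]
          exact cfcHom_id ha
        have h2 : cfcHom (R := ℝ) ha ((Polynomial.toContinuousMapOnAlgHom (spectrum ℝ a)) p)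
            = Polynomial.aeval a p := by
          have := DFunLike.congr_fun hkey p
          simpa using this
        rw [Set.mem_setOf_eq, h2]
        have hmem : Polynomial.aeval a p ∈ Algebra.adjoin ℝ {a} := by
          rw [Algebra.adjoin_singleton_eq_range_aeval]
          exact ⟨p, rfl⟩
        have hle : Algebra.adjoin ℝ {a} ≤ Subalgebra.centralizer ℝ {u} := by
          rw [Algebra.adjoin_le_iff]
          intro x hx
          rw [Set.mem_singleton_iff] at hx
          subst hx
          rw [SetLike.mem_coe, Subalgebra.mem_centralizer_iff]
          intro g hg
          rw [Set.mem_singleton_iff] at hg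
          subst hg
          exact h.eq
        have := hle hmem
        rw [Subalgebra.mem_centralizer_iff] at this
        exact this u (Set.mem_singleton u)
      have hg : g ∈ (polynomialFunctions (spectrum ℝ a)).topologicalClosure := by
        rw [polynomialFunctions.topologicalClosure (spectrum ℝ a)]
        trivial
      exact closure_minimal hpoly hclosed hg
    rw [cfc_apply f a ha hf]
    exact hall _
  · rw [cfc_apply_of_not_continuousOn a hf]
    exact Commute.zero_right u

noncomputable def bP (a : H →L[ℂ] H) (l : ℝ) : H →L[ℂ] H := cfc (fun t : ℝ => max (t - l) 0) a

noncomputable def bM (a : H →L[ℂ] H) (l : ℝ) : H →L[ℂ] H := cfc (fun t : ℝ => max (l - t) 0) a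

lemma fplus_continuous (l : ℝ) : Continuous (fun t : ℝ => max (t - l) 0) :=
  (continuous_id.sub continuous_const).max continuous_const

lemma fminus_continuous (l : ℝ) : Continuous (fun t : ℝ => max (l - t) 0) :=
  (continuous_const.sub continuous_id).max continuous_const

lemma bP_sa (a : H →L[ℂ] H) (l : ℝ) : IsSelfAdjoint (bP a l) := cfc_predicate _ a

lemma bP_nonneg (a : H →L[ℂ] H) (l : ℝ) : 0 ≤ bP a l :=
  cfc_nonneg fun _ _ => le_max_right _ _

lemma bM_nonneg (a : H →L[ℂ] H) (l : ℝ) : 0 ≤ bM a l :=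
  cfc_nonneg fun _ _ => le_max_right _ _

lemma bM_mul_bP (a : H →L[ℂ] H) (l : ℝ) : bM a l * bP a l = 0 := by
  rw [bM, bP, ← cfc_mul (fun t : ℝ => max (l - t) 0) (fun t : ℝ => max (t - l) 0) a
    ((fminus_continuous l).continuousOn) ((fplus_continuous l).continuousOn)]
  have h1 : (fun t : ℝ => max (l - t) 0 * max (t - l) 0) = fun _ : ℝ => (0 : ℝ) := by
    funext t
    rcases le_total t l with h | h
    · rw [max_eq_right (sub_nonpos.mpr h), mul_zero]
    · rw [max_eq_right (sub_nonpos.mpr h), zero_mul]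
  rw [h1]
  exact cfc_const_zero ℝ a

lemma bP_sub_bM (a : H →L[ℂ] H) (l : ℝ) (ha : IsSelfAdjoint a) :
    bP a l - bM a l = a - algebraMap ℝ (H →L[ℂ] H) l := by
  rw [bP, bM, ← cfc_sub (fun t : ℝ => max (t - l) 0) (fun t : ℝ => max (l - t) 0) a
    ((fplus_continuous l).continuousOn) ((fminus_continuous l).continuousOn)]
  have h1 : (fun t : ℝ => max (t - l) 0 - max (l - t) 0) = fun t : ℝ => t - l := by
    funext t
    rcases le_total t l with h | h
    · rw [max_eq_right (sub_nonpos.mpr h), max_eq_left (sub_nonneg.mpr h)]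
      ring
    · rw [max_eq_left (sub_nonneg.mpr h), max_eq_right (sub_nonpos.mpr h)]
      ring
  rw [h1]
  rw [cfc_sub (fun t : ℝ => t) (fun _ : ℝ => l) a continuous_id.continuousOn
    continuous_const.continuousOn, cfc_id' ℝ a ha, cfc_const l a ha]

noncomputable def Ksp (a : H →L[ℂ] H) (l : ℝ) : Submodule ℂ H :=
  (LinearMap.range (bP a l : H →ₗ[ℂ] H)).topologicalClosure

lemma Ksp_isClosed (a : H →L[ℂ] H) (l : ℝ) : IsClosed ((Ksp a l : Submodule ℂ H) : Set H) :=
  Submodule.isClosed_topologicalClosure _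

instance (a : H →L[ℂ] H) (l : ℝ) : CompleteSpace (Ksp a l) :=
  (Ksp_isClosed a l).completeSpace_coe

lemma range_le_Ksp (a : H →L[ℂ] H) (l : ℝ) : LinearMap.range (bP a l : H →ₗ[ℂ] H) ≤ Ksp a l :=
  Submodule.le_topologicalClosure _

lemma mem_Ksp_iff (a : H →L[ℂ] H) (l : ℝ) {x : H} :
    x ∈ Ksp a l ↔ x ∈ closure ((LinearMap.range (bP a l : H →ₗ[ℂ] H) : Submodule ℂ H) : Set H) :=
  Iff.rfl

noncomputable def eP (a : H →L[ℂ] H) (l : ℝ) : H →L[ℂ] H :=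
  (Ksp a l).subtypeL ∘L Submodule.orthogonalProjectionOnto (Ksp a l)

lemma eP_apply (a : H →L[ℂ] H) (l : ℝ) (x : H) :
    eP a l x = Submodule.orthogonalProjectionOnto (Ksp a l) x := rfl

lemma eP_mem (a : H →L[ℂ] H) (l : ℝ) (x : H) : eP a l x ∈ Ksp a l :=
  (Submodule.orthogonalProjectionOnto (Ksp a l) x).2

lemma eP_of_mem (a : H →L[ℂ] H) (l : ℝ) {x : H} (hx : x ∈ Ksp a l) : eP a l x = x := by
  rw [eP_apply]
  exact Submodule.starProjection_eq_self_iff.mpr hx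

lemma eP_sa (a : H →L[ℂ] H) (l : ℝ) : IsSelfAdjoint (eP a l) :=
  isSelfAdjoint_starProjection _

lemma eP_idem (a : H →L[ℂ] H) (l : ℝ) : IsIdempotentElem (eP a l) := by
  refine ContinuousLinearMap.ext fun x => ?_
  rw [ContinuousLinearMap.mul_apply]
  exact eP_of_mem a l (eP_mem a l x)

lemma maps_Ksp {a : H →L[ℂ] H} {l : ℝ} {v : H →L[ℂ] H} (hv : Commute v (bP a l)) {x : H}
    (hx : x ∈ Ksp a l) : v x ∈ Ksp a l := by
  have h1 : v '' ((LinearMap.range (bP a l : H →ₗ[ℂ] H) : Submodule ℂ H) : Set H) ⊆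
      ((LinearMap.range (bP a l : H →ₗ[ℂ] H) : Submodule ℂ H) : Set H) := by
    rintro _ ⟨_, ⟨y, rfl⟩, rfl⟩
    refine ⟨v y, ?_⟩
    have := DFunLike.congr_fun hv.eq y
    simpa [ContinuousLinearMap.mul_apply] using this.symm
  rw [mem_Ksp_iff] at hx
  have h2 : v x ∈ closure (v '' ((LinearMap.range (bP a l : H →ₗ[ℂ] H) : Submodule ℂ H) : Set H)) :=
    image_closure_subset_closure_image v.continuous ⟨x, hx, rfl⟩
  exact (mem_Ksp_iff a l).mpr (closure_mono h1 h2)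

lemma orth_maps {a : H →L[ℂ] H} {l : ℝ} {u : H →L[ℂ] H} (hstar : Commute (star u) (bP a l))
    {y : H} (hy : y ∈ (Ksp a l)ᗮ) : u y ∈ (Ksp a l)ᗮ := by
  rw [Submodule.mem_orthogonal] at hy ⊢
  intro k hk
  have h1 : ⟪k, u y⟫_ℂ = ⟪star u k, y⟫_ℂ := by
    rw [ContinuousLinearMap.star_eq_adjoint, ContinuousLinearMap.adjoint_inner_left]
  rw [h1]
  exact hy _ (maps_Ksp hstar hk)

lemma commute_eP {a : H →L[ℂ] H} {l : ℝ} {u : H →L[ℂ] H} (h1 : Commute u (bP a l))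
    (h2 : Commute (star u) (bP a l)) : Commute u (eP a l) := by
  refine ContinuousLinearMap.ext fun x => ?_
  rw [ContinuousLinearMap.mul_apply, ContinuousLinearMap.mul_apply]
  have hd : u x = u (eP a l x) + u (x - eP a l x) := by
    rw [← map_add]
    congr 1
    abel
  have hm : u (eP a l x) ∈ Ksp a l := maps_Ksp h1 (eP_mem a l x)
  have hosub : x - eP a l x ∈ (Ksp a l)ᗮ := by
    rw [eP_apply]
    exact Submodule.sub_starProjection_mem_orthogonal x
  have ho : u (x - eP a l x) ∈ (Ksp a l)ᗮ := orth_maps h2 hosub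
  have hz : eP a l (u (x - eP a l x)) = 0 := by
    rw [eP_apply, Submodule.orthogonalProjectionOnto_apply_of_mem_orthogonal ho]
    simp
  calc u (eP a l x) = eP a l (u (eP a l x)) + eP a l (u (x - eP a l x)) := by
        rw [eP_of_mem a l hm, hz, add_zero]
    _ = eP a l (u x) := by rw [← map_add, ← hd]

lemma re_smul_inner (r : ℝ) (x y : H) :
    RCLike.re ⟪(r • x : H), y⟫_ℂ = r * RCLike.re ⟪x, y⟫_ℂ := by
  rw [show (r • x : H) = (r : ℂ) • x by rw [← algebraMap_smul ℂ r x, Complex.coe_algebraMap],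
    inner_smul_left, Complex.conj_ofReal]
  simp [RCLike.re_to_complex, Complex.mul_re]

lemma orth_bP_eq_zero (a : H →L[ℂ] H) (l : ℝ) {y : H} (hy : y ∈ (Ksp a l)ᗮ) : bP a l y = 0 := by
  have hsym := (bP_sa a l).isSymmetric
  rw [Submodule.mem_orthogonal] at hy
  have h0 : ⟪(bP a l) ((bP a l) y), y⟫_ℂ = 0 :=
    hy _ (range_le_Ksp a l ⟨_, rfl⟩)
  have h1 : ⟪bP a l y, bP a l y⟫_ℂ = 0 := by
    have h2 := hsym (bP a l y) y
    simp only [ContinuousLinearMap.coe_coe] at h2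
    rw [← h2]
    exact h0
  exact inner_self_eq_zero.mp h1

lemma mem_bM_eq_zero (a : H →L[ℂ] H) (l : ℝ) {y : H} (hy : y ∈ Ksp a l) : bM a l y = 0 := by
  have hcl : IsClosed {z : H | bM a l z = 0} :=
    isClosed_eq (bM a l).continuous continuous_const
  have hsub : ((LinearMap.range (bP a l : H →ₗ[ℂ] H) : Submodule ℂ H) : Set H) ⊆ {z | bM a l z = 0} := by
    rintro _ ⟨x, rfl⟩
    have := DFunLike.congr_fun (bM_mul_bP a l) x
    simpa [ContinuousLinearMap.mul_apply] using this
  exact closure_minimal hsub hcl ((mem_Ksp_iff a l).mp hy)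

lemma nonneg_re (b : H →L[ℂ] H) (hb : 0 ≤ b) (y : H) : 0 ≤ RCLike.re ⟪b y, y⟫_ℂ := by
  have := (ContinuousLinearMap.nonneg_iff_isPositive b).mp hb
  simpa [ContinuousLinearMap.reApplyInnerSelf] using this.re_inner_nonneg_left y

lemma apply_decomp (a : H →L[ℂ] H) (l : ℝ) (ha : IsSelfAdjoint a) (y : H) :
    a y = bP a l y - bM a l y + l • y := by
  have h := DFunLike.congr_fun (bP_sub_bM a l ha) y
  simp only [ContinuousLinearMap.sub_apply] at h
  have halg : (algebraMap ℝ (H →L[ℂ] H) l) y = l • y := by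
    rw [Algebra.algebraMap_eq_smul_one]
    simp
  rw [halg] at h
  rw [h]
  abel

lemma re_apply_le (a : H →L[ℂ] H) (l : ℝ) (ha : IsSelfAdjoint a) {y : H}
    (hy : y ∈ (Ksp a l)ᗮ) : RCLike.re ⟪a y, y⟫_ℂ ≤ l * ‖y‖ ^ 2 := by
  rw [apply_decomp a l ha y, orth_bP_eq_zero a l hy, zero_sub, inner_add_left, inner_neg_left,
    map_add, map_neg, re_smul_inner, inner_self_eq_norm_sq]
  have h1 : 0 ≤ RCLike.re ⟪bM a l y, y⟫_ℂ := nonneg_re _ (bM_nonneg a l) y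
  linarith

lemma le_re_apply (a : H →L[ℂ] H) (l : ℝ) (ha : IsSelfAdjoint a) {y : H}
    (hy : y ∈ Ksp a l) : l * ‖y‖ ^ 2 ≤ RCLike.re ⟪a y, y⟫_ℂ := by
  rw [apply_decomp a l ha y, mem_bM_eq_zero a l hy, sub_zero, inner_add_left,
    map_add, re_smul_inner, inner_self_eq_norm_sq]
  have h1 : 0 ≤ RCLike.re ⟪bP a l y, y⟫_ℂ := nonneg_re _ (bP_nonneg a l) y
  linarith

lemma commute_a_eP {a : H →L[ℂ] H} (l : ℝ) (ha : IsSelfAdjoint a) : Commute a (eP a l) := by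
  have h1 : Commute a (bP a l) := commute_cfc ha (Commute.refl a) _
  have h2 : Commute (star a) (bP a l) := by rw [ha.star_eq]; exact h1
  exact commute_eP h1 h2

lemma Ksp_mono (a : H →L[ℂ] H) {l m : ℝ} (h : l < m) : Ksp a m ≤ Ksp a l := by
  set g : ℝ → ℝ := fun t => max (t - m) 0 / max (t - l) (m - l) with hgdef
  have hgc : Continuous g := by
    refine Continuous.div (fplus_continuous m)
      ((continuous_id.sub continuous_const).max continuous_const) fun t => ?_
    exact ne_of_gt (lt_of_lt_of_le (sub_pos.mpr h) (le_max_right _ _))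
  have hfun : ∀ t : ℝ, max (t - l) 0 * g t = max (t - m) 0 := by
    intro t
    rcases le_total t m with ht | ht
    · have h0 : max (t - m) 0 = 0 := max_eq_right (sub_nonpos.mpr ht)
      rw [hgdef]
      simp only
      rw [h0, zero_div, mul_zero]
    · have h1 : max (t - m) 0 = t - m := max_eq_left (sub_nonneg.mpr ht)
      have h2 : max (t - l) (m - l) = t - l := max_eq_left (by linarith)
      have h3 : max (t - l) 0 = t - l := max_eq_left (by linarith)
      have h4 : t - l ≠ 0 := ne_of_gt (by linarith)
      rw [hgdef]
      simp only
      rw [h1, h2, h3]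
      field_simp
  have hbm : bP a m = bP a l * cfc g a := by
    have step1 : bP a m = cfc (fun t : ℝ => max (t - l) 0 * g t) a := by
      apply cfc_congr
      intro t _
      exact (hfun t).symm
    rw [step1, cfc_mul (fun t : ℝ => max (t - l) 0) g a
      ((fplus_continuous l).continuousOn) hgc.continuousOn]
    rfl
  refine Submodule.topologicalClosure_minimal _ ?_ (Ksp_isClosed a l)
  rintro y ⟨x, rfl⟩
  have hx : bP a m x = bP a l ((cfc g a) x) := by
    rw [hbm]
    rfl
  rw [ContinuousLinearMap.coe_coe, hx]
  exact range_le_Ksp a l ⟨_, rfl⟩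

lemma eP_mul_eP (a : H →L[ℂ] H) {l m : ℝ} (h : l < m) :
    eP a l * eP a m = eP a m ∧ eP a m * eP a l = eP a m := by
  have h1 : eP a l * eP a m = eP a m := by
    refine ContinuousLinearMap.ext fun x => ?_
    rw [ContinuousLinearMap.mul_apply]
    exact eP_of_mem a l (Ksp_mono a h (eP_mem a m x))
  refine ⟨h1, ?_⟩
  have h2 := congrArg star h1
  rwa [star_mul, (eP_sa a l).star_eq, (eP_sa a m).star_eq] at h2

lemma bP_eq_zero [Nontrivial H] (a : H →L[ℂ] H) (l : ℝ) (ha : IsSelfAdjoint a)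
    (hl : ‖a‖ ≤ l) : bP a l = 0 := by
  rw [bP]
  have h1 : cfc (fun t : ℝ => max (t - l) 0) a = cfc (fun _ : ℝ => (0 : ℝ)) a := by
    apply cfc_congr
    intro t ht
    have h2 := spectrum.norm_le_norm_of_mem ht
    rw [Real.norm_eq_abs] at h2
    have h3 : t ≤ l := le_trans (le_trans (le_abs_self t) h2) hl
    simpa using max_eq_right (sub_nonpos.mpr h3)
  rw [h1]
  exact cfc_const_zero ℝ a

lemma eP_eq_zero [Nontrivial H] (a : H →L[ℂ] H) (l : ℝ) (ha : IsSelfAdjoint a)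
    (hl : ‖a‖ ≤ l) : eP a l = 0 := by
  have hK : Ksp a l ≤ ⊥ := by
    refine Submodule.topologicalClosure_minimal _ ?_ ?_
    · rintro y ⟨x, rfl⟩
      simp [bP_eq_zero a l ha hl]
    · show IsClosed ((⊥ : Submodule ℂ H) : Set H)
      rw [Submodule.bot_coe]
      exact isClosed_singleton
  refine ContinuousLinearMap.ext fun x => ?_
  have h1 := hK (eP_mem a l x)
  rw [Submodule.mem_bot] at h1
  simpa using h1

lemma eP_eq_one [Nontrivial H] (a : H →L[ℂ] H) (l : ℝ) (ha : IsSelfAdjoint a)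
    (hl : l < -‖a‖) : eP a l = 1 := by
  have hb : bP a l = a - algebraMap ℝ (H →L[ℂ] H) l := by
    rw [bP]
    have h1 : cfc (fun t : ℝ => max (t - l) 0) a = cfc (fun t : ℝ => t - l) a := by
      apply cfc_congr
      intro t ht
      have hn := spectrum.norm_le_norm_of_mem ht
      rw [Real.norm_eq_abs] at hn
      have h2 : l < t := by
        have := neg_abs_le t
        linarith
      simpa using max_eq_left (sub_nonneg.mpr h2.le)
    rw [h1, cfc_sub (fun t : ℝ => t) (fun _ : ℝ => l) a continuous_id.continuousOn
      continuous_const.continuousOn, cfc_id' ℝ a ha, cfc_const l a ha]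
  have hunit : IsUnit (bP a l) := by
    have hls : l ∉ spectrum ℝ a := by
      intro hc
      have h2 := spectrum.norm_le_norm_of_mem hc
      rw [Real.norm_eq_abs] at h2
      have := neg_le_abs l
      linarith
    rw [spectrum.notMem_iff] at hls
    rw [hb, ← neg_sub]
    exact hls.neg
  have hKtop : ∀ x : H, x ∈ Ksp a l := by
    intro x
    obtain ⟨v, hv⟩ := hunit
    have hvx : bP a l ((↑v⁻¹ : H →L[ℂ] H) x) = x := by
      calc bP a l ((↑v⁻¹ : H →L[ℂ] H) x) = ((↑v * ↑v⁻¹ : H →L[ℂ] H)) x := by rw [hv]; rfl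
        _ = x := by rw [v.mul_inv]; rfl
    exact range_le_Ksp a l ⟨_, hvx⟩
  refine ContinuousLinearMap.ext fun x => ?_
  rw [ContinuousLinearMap.one_apply]
  exact eP_of_mem a l (hKtop x)

lemma commute_bP_of_commute {u a : H →L[ℂ] H} (ha : IsSelfAdjoint a) (hc : Commute u a)
    (l : ℝ) : Commute u (bP a l) := by
  rw [bP]
  exact commute_cfc ha hc _

lemma real_smul_sa {r : ℝ} {T : H →L[ℂ] H} (hT : IsSelfAdjoint T) :
    IsSelfAdjoint (r • T) := by
  rw [show r • T = (r : ℂ) • T from by rw [← algebraMap_smul ℂ r T, Complex.coe_algebraMap]]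
  rw [IsSelfAdjoint, star_smul, hT.star_eq]
  norm_num

set_option maxHeartbeats 2000000 in
set_option synthInstance.maxHeartbeats 1000000 in
lemma approx_selfadjoint [Nontrivial H] (W : VonNeumannAlgebra H) {h : H →L[ℂ] H}
    (hmem : h ∈ W) (hsa : IsSelfAdjoint h) (S : Submodule ℂ (H →L[ℂ] H))
    (hS : ∀ e : H →L[ℂ] H, e ∈ W → IsSelfAdjoint e → IsIdempotentElem e → e ∈ S)
    {ε : ℝ} (hε : 0 < ε) : ∃ s ∈ S, ‖h - s‖ < ε := by
  set δ := ε / 2 with hδdef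
  have hδ : 0 < δ := by positivity
  set n := ⌈(2 * ‖h‖) / δ⌉₊ + 1 with hn
  set lam : ℕ → ℝ := fun i => -‖h‖ - δ / 2 + i * δ with hlam
  have hlam_succ : ∀ i : ℕ, lam (i + 1) = lam i + δ := by
    intro i
    rw [hlam]
    push_cast
    ring
  have hlam_lt : ∀ i : ℕ, lam i < lam (i + 1) := fun i => by rw [hlam_succ]; linarith
  set e : ℕ → H →L[ℂ] H := fun i => eP h (lam i) with he
  have he_mem : ∀ i, e i ∈ W := by
    intro i
    have hmem2 : e i ∈ Set.centralizer (Set.centralizer (W : Set (H →L[ℂ] H))) := by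
      rw [Set.mem_centralizer_iff]
      intro u hu
      have hcu : Commute u h := (hu h hmem).symm
      have hcsu : Commute (star u) h := by
        have h1 := congrArg star (hu h hmem)
        rwa [star_mul, star_mul, hsa.star_eq] at h1
      exact (commute_eP (commute_bP_of_commute hsa hcu _)
        (commute_bP_of_commute hsa hcsu _)).eq
    rwa [W.centralizer_centralizer] at hmem2
  have he_sa : ∀ i, IsSelfAdjoint (e i) := fun i => eP_sa h (lam i)
  have he_comm : ∀ i, Commute h (e i) := fun i => commute_a_eP (lam i) hsa
  have he0 : e 0 = 1 := by
    refine eP_eq_one h (lam 0) hsa ?_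
    rw [hlam]
    push_cast
    linarith
  have hen : e n = 0 := by
    refine eP_eq_zero h (lam n) hsa ?_
    have h1 : (2 * ‖h‖) / δ ≤ (⌈(2 * ‖h‖) / δ⌉₊ : ℝ) := Nat.le_ceil _
    have h2 : 2 * ‖h‖ ≤ (⌈(2 * ‖h‖) / δ⌉₊ : ℝ) * δ := by
      rw [div_le_iff₀ hδ] at h1
      linarith
    rw [hlam, hn]
    push_cast
    nlinarith
  set p : ℕ → H →L[ℂ] H := fun i => e i - e (i + 1) with hp
  have hp_sum : ∑ i ∈ Finset.range n, p i = 1 := by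
    rw [hp]
    rw [Finset.sum_range_sub' e n, he0, hen, sub_zero]
  have hee : ∀ i : ℕ, e (i + 1) * e i = e (i + 1) ∧ e i * e (i + 1) = e (i + 1) := by
    intro i
    have h1 := eP_mul_eP h (hlam_lt i)
    exact ⟨h1.2, h1.1⟩
  have hp_idem : ∀ i, p i * p i = p i := by
    intro i
    rw [hp]
    simp only
    rw [sub_mul, mul_sub, mul_sub, (eP_idem h (lam i)), (eP_idem h (lam (i + 1))),
      (hee i).1, (hee i).2]
    abel
  have hp_sa : ∀ i, IsSelfAdjoint (p i) := fun i => (he_sa i).sub (he_sa (i + 1))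
  have hp_comm : ∀ i, Commute h (p i) := fun i => (he_comm i).sub_right (he_comm (i + 1))
  have he1p : ∀ i, e (i + 1) * p i = 0 := by
    intro i
    rw [hp]
    simp only
    rw [mul_sub, (hee i).1, (eP_idem h (lam (i + 1))), sub_self]
  have heip : ∀ i, e i * p i = p i := by
    intro i
    rw [hp]
    simp only
    rw [mul_sub, (eP_idem h (lam i)), (hee i).2]
  have hkey : ∀ i x, RCLike.re ⟪(h * p i) x, x⟫_ℂ = RCLike.re ⟪h ((p i) x), (p i) x⟫_ℂ ∧
      RCLike.re ⟪((p i) x : H), x⟫_ℂ = ‖(p i) x‖ ^ 2 := by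
    intro i x
    constructor
    · have hmulp : p i * (h * p i) = h * p i := by
        rw [← mul_assoc, ← (hp_comm i).eq, mul_assoc, hp_idem i]
      have hpx : (h * p i) x = (p i) (h ((p i) x)) := by
        conv_lhs => rw [← hmulp]
        rfl
      rw [hpx]
      have hsym := (hp_sa i).isSymmetric (h ((p i) x)) x
      simp only [ContinuousLinearMap.coe_coe] at hsym
      rw [hsym]
    · have hpp : (p i) x = (p i) ((p i) x) := by
        rw [← ContinuousLinearMap.mul_apply, hp_idem i]
      conv_lhs => rw [hpp]
      have hsym := (hp_sa i).isSymmetric ((p i) x) x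
      simp only [ContinuousLinearMap.coe_coe] at hsym
      rw [hsym, inner_self_eq_norm_sq]
  have hU : ∀ i, (lam (i + 1) • p i - h * p i).IsPositive := by
    intro i
    have hhp_sa : IsSelfAdjoint (h * p i) := by
      rw [IsSelfAdjoint, star_mul, hsa.star_eq, (hp_sa i).star_eq]
      exact ((hp_comm i).eq).symm
    refine ⟨((real_smul_sa (hp_sa i)).sub hhp_sa).isSymmetric, fun x => ?_⟩
    rw [ContinuousLinearMap.reApplyInnerSelf_apply, ContinuousLinearMap.sub_apply,
      inner_sub_left, map_sub, (hkey i x).1, ContinuousLinearMap.smul_apply,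
      re_smul_inner, (hkey i x).2]
    have hymem : e (i + 1) ((p i) x) = 0 := by
      rw [← ContinuousLinearMap.mul_apply, he1p i]
      simp
    have hyorth : (p i) x ∈ (Ksp h (lam (i + 1)))ᗮ := by
      have h0 : (p i) x - (Submodule.orthogonalProjectionOnto (Ksp h (lam (i + 1))) ((p i) x) : H) ∈
          (Ksp h (lam (i + 1)))ᗮ := Submodule.sub_starProjection_mem_orthogonal ((p i) x)
      rw [← eP_apply] at h0
      rw [show eP h (lam (i + 1)) ((p i) x) = 0 from hymem] at h0
      simpa using h0
    have h3 := re_apply_le h (lam (i + 1)) hsa hyorth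
    linarith
  have hL : ∀ i, (h * p i - lam i • p i).IsPositive := by
    intro i
    have hhp_sa : IsSelfAdjoint (h * p i) := by
      rw [IsSelfAdjoint, star_mul, hsa.star_eq, (hp_sa i).star_eq]
      exact ((hp_comm i).eq).symm
    refine ⟨(hhp_sa.sub (real_smul_sa (hp_sa i))).isSymmetric, fun x => ?_⟩
    rw [ContinuousLinearMap.reApplyInnerSelf_apply, ContinuousLinearMap.sub_apply,
      inner_sub_left, map_sub, (hkey i x).1, ContinuousLinearMap.smul_apply,
      re_smul_inner, (hkey i x).2]
    have hymem : e i ((p i) x) = (p i) x := by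
      rw [← ContinuousLinearMap.mul_apply, heip i]
    have hymem2 : (p i) x ∈ Ksp h (lam i) := by
      rw [← hymem]
      exact eP_mem h (lam i) _
    have h3 := le_re_apply h (lam i) hsa hymem2
    linarith
  set s : H →L[ℂ] H := ∑ i ∈ Finset.range n, lam (i + 1) • p i with hs
  have hsum_pos : ∀ (F : ℕ → H →L[ℂ] H), (∀ i, (F i).IsPositive) →
      (∑ i ∈ Finset.range n, F i).IsPositive := by
    intro F hF
    exact Finset.sum_induction F ContinuousLinearMap.IsPositive
      (fun x y hx hy => hx.add hy) ContinuousLinearMap.isPositive_zero (fun i _ => hF i)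
  have hd1 : s - h = ∑ i ∈ Finset.range n, (lam (i + 1) • p i - h * p i) := by
    rw [Finset.sum_sub_distrib, ← hs]
    congr 1
    rw [← Finset.mul_sum, hp_sum, mul_one]
  have hpos1 : (0 : H →L[ℂ] H) ≤ s - h := by
    rw [ContinuousLinearMap.nonneg_iff_isPositive, hd1]
    exact hsum_pos _ hU
  have hd2 : algebraMap ℝ (H →L[ℂ] H) δ - (s - h) = ∑ i ∈ Finset.range n,
      (h * p i - lam i • p i) := by
    have hδ1 : algebraMap ℝ (H →L[ℂ] H) δ = ∑ i ∈ Finset.range n, δ • p i := by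
      rw [← Finset.smul_sum, hp_sum, Algebra.algebraMap_eq_smul_one]
    rw [hδ1, hd1, ← Finset.sum_sub_distrib]
    refine Finset.sum_congr rfl fun i _ => ?_
    rw [hlam_succ i]
    module
  have hpos2 : s - h ≤ algebraMap ℝ (H →L[ℂ] H) δ := by
    rw [← sub_nonneg, ContinuousLinearMap.nonneg_iff_isPositive, hd2]
    exact hsum_pos _ hL
  have hnorm : ‖s - h‖ ≤ δ :=
    (CStarAlgebra.norm_le_iff_le_algebraMap (s - h) hδ.le hpos1).mpr hpos2
  refine ⟨s, ?_, ?_⟩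
  · refine Submodule.sum_mem _ fun i _ => ?_
    have hcoe : lam (i + 1) • p i = ((lam (i + 1) : ℂ)) • p i := by
      rw [← algebraMap_smul ℂ (lam (i + 1)) (p i), Complex.coe_algebraMap]
    rw [hcoe]
    refine Submodule.smul_mem _ _ (Submodule.sub_mem _ ?_ ?_)
    · exact hS (e i) (he_mem i) (he_sa i) (eP_idem h (lam i))
    · exact hS (e (i + 1)) (he_mem (i + 1)) (he_sa (i + 1)) (eP_idem h (lam (i + 1)))
  · rw [norm_sub_rev]
    linarith


noncomputable def liftFA (W : VonNeumannAlgebra H) : FreeAbelianGroup (LW W) →+ (H →L[ℂ] H) :=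
  FreeAbelianGroup.lift Subtype.val

lemma liftFA_of (W : VonNeumannAlgebra H) (p : LW W) :
    liftFA W (FreeAbelianGroup.of p) = p.1 :=
  FreeAbelianGroup.lift_apply_of _ _

noncomputable def liftQ (W : VonNeumannAlgebra H) :
    (FreeAbelianGroup (LW W) ⧸ relW W) →+ (H →L[ℂ] H) :=
  QuotientAddGroup.lift (relW W) (liftFA W) (by
    intro x hx
    have h : relW W ≤ (liftFA W).ker := by
      rw [relW, AddSubgroup.closure_le]
      rintro a ⟨p, q, r, hpq, hr, rfl⟩
      simp [AddMonoidHom.mem_ker, map_sub, liftFA_of, hr]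
    exact h hx)

lemma liftQ_mk (W : VonNeumannAlgebra H) (x : FreeAbelianGroup (LW W)) :
    liftQ W (QuotientAddGroup.mk x) = liftFA W x := rfl

noncomputable def ibar (W : VonNeumannAlgebra H) : MCW W →ₗ[ℂ] (H →L[ℂ] H) :=
  TensorProduct.AlgebraTensorModule.lift
    (LinearMap.toSpanSingleton ℂ _ (liftQ W).toIntLinearMap)

lemma ibar_piC (W : VonNeumannAlgebra H) (p : LW W) : ibar W (piC W p) = p.1 := by
  simp [ibar, piC, LinearMap.toSpanSingleton_apply, liftQ_mk, liftFA_of]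

lemma piC_smul (W : VonNeumannAlgebra H) (c : ℂ) (x : FreeAbelianGroup (LW W)) (p : LW W)
    (hx : x = FreeAbelianGroup.of p) :
    (c ⊗ₜ[ℤ] (QuotientAddGroup.mk x : FreeAbelianGroup (LW W) ⧸ relW W) : MCW W)
      = c • piC W p := by
  subst hx
  rw [piC, TensorProduct.smul_tmul']
  norm_num

lemma key_cases {W : VonNeumannAlgebra H} (P : MCW W → Prop)
    (h0 : P 0)
    (hsmul : ∀ (c : ℂ) (p : LW W), P (c • piC W p))
    (hneg : ∀ m, P m → P (-m))
    (hadd : ∀ m n, P m → P n → P (m + n)) :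
    ∀ m : MCW W, P m := by
  intro m
  induction m using TensorProduct.induction_on with
  | zero => exact h0
  | add m n hm hn => exact hadd _ _ hm hn
  | tmul c y =>
    induction y using QuotientAddGroup.induction_on with
    | H x =>
      induction x using FreeAbelianGroup.induction_on with
      | zero => simpa using h0
      | of p => rw [piC_smul W c _ p rfl]; exact hsmul c p
      | neg p hp =>
        have : (c ⊗ₜ[ℤ] (QuotientAddGroup.mk (-FreeAbelianGroup.of p) :
            FreeAbelianGroup (LW W) ⧸ relW W) : MCW W)
            = -(c ⊗ₜ[ℤ] (QuotientAddGroup.mk (FreeAbelianGroup.of p) :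
            FreeAbelianGroup (LW W) ⧸ relW W)) := by
          rw [← TensorProduct.tmul_neg]
          rfl
        rw [this]
        exact hneg _ hp
      | add x y hx hy =>
        have : (c ⊗ₜ[ℤ] (QuotientAddGroup.mk (x + y) :
            FreeAbelianGroup (LW W) ⧸ relW W) : MCW W)
            = c ⊗ₜ[ℤ] (QuotientAddGroup.mk x : FreeAbelianGroup (LW W) ⧸ relW W)
              + c ⊗ₜ[ℤ] (QuotientAddGroup.mk y : FreeAbelianGroup (LW W) ⧸ relW W) := by
          rw [← TensorProduct.tmul_add]
          rfl
        rw [this]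
        exact hadd _ _ hx hy

lemma hom_ext {W : VonNeumannAlgebra H} {i j : MCW W →ₗ[ℂ] (H →L[ℂ] H)}
    (h : ∀ p, i (piC W p) = j (piC W p)) : i = j := by
  refine LinearMap.ext fun m => ?_
  refine key_cases (fun m => i m = j m) (by simp) ?_ ?_ ?_ m
  · intro c p; rw [map_smul, map_smul, h p]
  · intro m hm; rw [map_neg, map_neg, hm]
  · intro m n hm hn; rw [map_add, map_add, hm, hn]

end Stmt16Aux

/-- For a von Neumann algebra `W` on a separable complex Hilbert space: (a) there is a
unique `ℂ`-linear map `ī : M_ℂ → W` with `ī ∘ π_ℂ` the inclusion `L(W) ↪ W`; (b) the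
universal complex measure `π_ℂ` is injective; (c) the image of `ī` lies in `W` and is
dense in `W` for the operator norm. -/
theorem stmt_16 [TopologicalSpace.SeparableSpace H] (W : VonNeumannAlgebra H) :
    (∃! i : MCW W →ₗ[ℂ] (H →L[ℂ] H), ∀ p : LW W, i (piC W p) = p.1) ∧
    Function.Injective (piC W) ∧
    (∀ i : MCW W →ₗ[ℂ] (H →L[ℂ] H), (∀ p : LW W, i (piC W p) = p.1) →
      (∀ m : MCW W, i m ∈ W) ∧ ∀ w : H →L[ℂ] H, w ∈ W → w ∈ closure (Set.range ⇑i)) := by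
  refine ⟨⟨Stmt16Aux.ibar W, Stmt16Aux.ibar_piC W,
    fun j hj => Stmt16Aux.hom_ext fun p => by rw [hj, Stmt16Aux.ibar_piC]⟩, ?_, ?_⟩
  · intro p q hpq
    have h1 := congrArg (Stmt16Aux.ibar W) hpq
    rw [Stmt16Aux.ibar_piC, Stmt16Aux.ibar_piC] at h1
    exact Subtype.ext h1
  · intro i hi
    constructor
    · refine Stmt16Aux.key_cases (fun m => i m ∈ W) ?_ ?_ ?_ ?_
      · show i 0 ∈ W
        rw [map_zero]
        exact zero_mem W.toStarSubalgebra
      · intro c p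
        show i (c • piC W p) ∈ W
        rw [map_smul, hi p]
        exact W.toStarSubalgebra.smul_mem p.2.1 c
      · intro m hm
        show i (-m) ∈ W
        rw [map_neg]
        exact neg_mem hm
      · intro m m' hm hm'
        show i (m + m') ∈ W
        rw [map_add]
        exact add_mem hm hm'
    · intro w hw
      rcases subsingleton_or_nontrivial H with hsub | hnt
      · haveI : Subsingleton (H →L[ℂ] H) :=
          ⟨fun f g => ContinuousLinearMap.ext fun x => Subsingleton.elim _ _⟩
        exact subset_closure ⟨0, Subsingleton.elim _ _⟩
      · set S : Submodule ℂ (H →L[ℂ] H) := LinearMap.range i with hSdef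
        have hSr : (S : Set (H →L[ℂ] H)) = Set.range ⇑i := by
          rw [hSdef]
          exact LinearMap.coe_range i
        have hproj : ∀ e : H →L[ℂ] H, e ∈ W → IsSelfAdjoint e → IsIdempotentElem e →
            e ∈ S := by
          intro e he1 he2 he3
          exact ⟨piC W ⟨e, he1, he2, he3⟩, hi _⟩
        have key : ∀ v : H →L[ℂ] H, v ∈ W → IsSelfAdjoint v →
            v ∈ closure (Set.range ⇑i) := by
          intro v hv hvsa
          rw [Metric.mem_closure_iff]
          intro ε hε
          obtain ⟨s, hs1, hs2⟩ := Stmt16Aux.approx_selfadjoint W hv hvsa S hproj hε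
          refine ⟨s, ?_, ?_⟩
          · rw [← hSr]
            exact hs1
          · rw [dist_eq_norm]
            exact hs2
        set v1 : H →L[ℂ] H := (2 : ℂ)⁻¹ • (w + star w) with hv1
        set v2 : H →L[ℂ] H := (2 * Complex.I)⁻¹ • (w - star w) with hv2
        have hwdec : w = v1 + Complex.I • v2 := by
          rw [hv1, hv2, smul_smul]
          have h2 : Complex.I * (2 * Complex.I)⁻¹ = (2 : ℂ)⁻¹ := by
            field_simp
          rw [h2, ← smul_add]
          have : w + star w + (w - star w) = (2 : ℂ) • w := by
            rw [two_smul]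
            abel
          rw [this, smul_smul]
          norm_num
        have hsa1 : IsSelfAdjoint v1 := by
          rw [hv1, IsSelfAdjoint, star_smul, star_add, star_star]
          rw [add_comm (star w) w]
          congr 1
          simp
        have hsa2 : IsSelfAdjoint v2 := by
          have hconj : (starRingEnd ℂ) (2 * Complex.I)⁻¹ = -(2 * Complex.I)⁻¹ := by
            rw [map_inv₀, map_mul, Complex.conj_I]
            rw [show ((starRingEnd ℂ) 2 * -Complex.I) = -(2 * Complex.I) from by
              rw [Complex.conj_ofNat]
              ring]
            rw [← neg_inv]
          rw [hv2, IsSelfAdjoint, star_smul, star_sub, star_star, Complex.star_def, hconj]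
          rw [show star w - w = -(w - star w) from by rw [neg_sub]]
          rw [smul_neg, neg_smul, neg_neg]
        have hmem1 : v1 ∈ W := by
          rw [hv1]
          exact W.toStarSubalgebra.smul_mem (add_mem hw (star_mem hw)) _
        have hmem2 : v2 ∈ W := by
          rw [hv2]
          exact W.toStarSubalgebra.smul_mem (sub_mem hw (star_mem hw)) _
        have hc1 : v1 ∈ S.topologicalClosure := by
          have := key v1 hmem1 hsa1
          rwa [← hSr, ← Submodule.topologicalClosure_coe, SetLike.mem_coe] at this
        have hc2 : v2 ∈ S.topologicalClosure := by
          have := key v2 hmem2 hsa2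
          rwa [← hSr, ← Submodule.topologicalClosure_coe, SetLike.mem_coe] at this
        have hwS : w ∈ S.topologicalClosure := by
          rw [hwdec]
          exact add_mem hc1 (Submodule.smul_mem _ _ hc2)
        rw [← hSr, ← Submodule.topologicalClosure_coe]
        exact hwS
end
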